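/- arXiv:1702.06474 — 2 statements merged into one kernel-verified Lean document; each statement's English description precedes it below -/
import Mathlib

section
/- Let T be a star connection formed from stars S_{n_1},...,S_{n_r} (r ≥ 2, each n_i ≥ 3) glued at non-center vertices v_1,...,v_t, so that any two stars share at most one vertex, no center belongs to more than one star, T is a tree, and each connection vertex v_i has degree in T equal to the number of stars containing it. Then the independence number of T equals Σ_{k=1}^{r}(n_k − 1) − Σ_{i=1}^{t}(deg_T(v_i) − 1). -/
/-- An independent set of vertices: pairwise non-adjacent. -/
def IndepSet {V : Type*} (G : SimpleGraph V) (s : Set V) : Prop :=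
  s.Pairwise fun u v => ¬ G.Adj u v

/-- The independence number of a graph: the maximum cardinality of an independent set. -/
noncomputable def indepNum {V : Type*} [Fintype V] (G : SimpleGraph V) : ℕ :=
  sSup {k | ∃ s : Set V, IndepSet G s ∧ s.ncard = k}

/-- A leaf is a vertex of degree 1. -/
def IsLeaf {V : Type*} (G : SimpleGraph V) (v : V) : Prop :=
  (G.neighborSet v).ncard = 1

/-- In a tree rooted at `ρ`, there is a "parent" function such that for any edge,
one endpoint is the parent of the other. -/
lemma tree_parent {V : Type*} {T : SimpleGraph V} (htree : T.IsTree) (ρ : V) :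
    ∃ par : V → V, ∀ x y, T.Adj x y → par x = y ∨ par y = x := by
  classical
  have hU := htree.existsUnique_path
  choose P hP hPu using fun v => hU v ρ
  refine ⟨fun v => (P v).getVert 1, fun x y hxy => ?_⟩
  by_contra h
  push_neg at h
  obtain ⟨h1, h2⟩ := h
  have key : ∀ a b, T.Adj a b → (P a).getVert 1 ≠ b → a ∈ (P b).support := by
    intro a b hab hne
    by_contra hmem
    have hpath : (SimpleGraph.Walk.cons hab (P b)).IsPath :=
      (SimpleGraph.Walk.cons_isPath_iff hab (P b)).2 ⟨hP b, hmem⟩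
    have heq := hPu a _ hpath
    apply hne
    rw [← heq]
    exact (SimpleGraph.Walk.getVert_cons_succ (n := 0) (P b) hab).trans (SimpleGraph.Walk.getVert_zero _)
  have hx : x ∈ (P y).support := key x y hxy h1
  have hy : y ∈ (P x).support := key y x hxy.symm h2
  -- the suffix of P y from x is a path from x to ρ, hence equals P x
  have hdrop : ((P y).dropUntil x hx).IsPath := (hP y).dropUntil hx
  have heq : (P y).dropUntil x hx = P x := hPu x _ hdrop
  -- y appears both as head of the prefix and inside the suffix: contradicts Nodup
  have hnodup : (P y).support.Nodup := (hP y).support_nodup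
  have hspec := (P y).take_spec hx
  rw [← hspec, SimpleGraph.Walk.support_append] at hnodup
  have hy2 : y ∈ ((P y).dropUntil x hx).support.tail := by
    have hmem : y ∈ ((P y).dropUntil x hx).support := by rw [heq]; exact hy
    rw [SimpleGraph.Walk.support_eq_cons] at hmem
    rcases List.mem_cons.1 hmem with h' | h'
    · exact absurd h' hxy.ne'
    · exact h'
  exact (List.disjoint_of_nodup_append hnodup)
    (SimpleGraph.Walk.start_mem_support _) hy2

/-- For a star connection `T` built from `r ≥ 2` stars `S (n i)` (with centers `c i` and
vertex sets `S i`, `n i ≥ 3`), glued only at non-center vertices, any two stars sharing at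
most one vertex and no center lying in more than one star, the independence number equals
`∑ (n i - 1) - ∑ (deg v - 1)`, the second sum ranging over the connection vertices
(vertices lying in at least two stars). -/
theorem starConnection_indepNum {V : Type*} [Fintype V]
    (T : SimpleGraph V) (r : ℕ) (n : Fin r → ℕ) (c : Fin r → V) (S : Fin r → Set V)
    (hr : 2 ≤ r) (hn : ∀ i, 3 ≤ n i)
    (hScard : ∀ i, (S i).ncard = n i)
    (hcmem : ∀ i, c i ∈ S i)
    (hcover : ∀ v, ∃ i, v ∈ S i)
    (hAdj : ∀ u v, T.Adj u v ↔ ∃ i, u ≠ v ∧ ((u = c i ∧ v ∈ S i) ∨ (v = c i ∧ u ∈ S i)))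
    (hinter : ∀ i j, i ≠ j → (S i ∩ S j).Subsingleton)
    (hcenter : ∀ i j, c i ∈ S j → j = i)
    (htree : T.IsTree) :
    indepNum T = (∑ i, (n i - 1)) -
      ∑ᶠ v ∈ {v : V | ∃ i j, i ≠ j ∧ v ∈ S i ∧ v ∈ S j}, ((T.neighborSet v).ncard - 1) := by
  classical
  set C : Set V := {v : V | ∃ i j, i ≠ j ∧ v ∈ S i ∧ v ∈ S j} with hCdef
  set N : ℕ := Nat.card V with hNdef
  -- centers are injective
  have hcinj : Function.Injective c := by
    intro i j hij
    have hmem : c i ∈ S j := by rw [hij]; exact hcmem j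
    exact (hcenter i j hmem).symm
  -- centers are not connection vertices
  have hcnotC : ∀ k, c k ∉ C := by
    rintro k ⟨i, j, hij, hi, hj⟩
    exact hij ((hcenter k i hi).trans (hcenter k j hj).symm)
  -- the multiplicity function
  set d : V → ℕ := fun v => (Finset.univ.filter fun i => v ∈ S i).card with hddef
  have hd1 : ∀ v, 1 ≤ d v := by
    intro v
    obtain ⟨i, hi⟩ := hcover v
    exact Finset.card_pos.2 ⟨i, Finset.mem_filter.2 ⟨Finset.mem_univ i, hi⟩⟩
  have hCd : ∀ v, v ∈ C ↔ 2 ≤ d v := by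
    intro v
    constructor
    · rintro ⟨i, j, hij, hi, hj⟩
      exact Finset.one_lt_card.2 ⟨i, Finset.mem_filter.2 ⟨Finset.mem_univ i, hi⟩,
        j, Finset.mem_filter.2 ⟨Finset.mem_univ j, hj⟩, hij⟩
    · intro h
      obtain ⟨i, hi, j, hj, hij⟩ := Finset.one_lt_card.1 h
      exact ⟨i, j, hij, (Finset.mem_filter.1 hi).2, (Finset.mem_filter.1 hj).2⟩
  -- degrees of connection vertices
  have hdeg : ∀ v ∈ C, (T.neighborSet v).ncard = d v := by
    intro v hv
    have hvnotc : ∀ k, v ≠ c k := by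
      intro k hk
      exact hcnotC k (hk ▸ hv)
    have hset : T.neighborSet v = c '' {i | v ∈ S i} := by
      ext u
      simp only [SimpleGraph.mem_neighborSet, hAdj, Set.mem_image, Set.mem_setOf_eq]
      constructor
      · rintro ⟨i, hne, ⟨hvc, _⟩ | ⟨huc, hvS⟩⟩
        · exact absurd hvc (hvnotc i)
        · exact ⟨i, hvS, huc.symm⟩
      · rintro ⟨i, hvS, rfl⟩
        exact ⟨i, (hvnotc i), Or.inr ⟨rfl, hvS⟩⟩
    rw [hset, Set.ncard_image_of_injective _ hcinj]
    have : {i | v ∈ S i} = ↑(Finset.univ.filter fun i => v ∈ S i) := by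
      ext i; simp
    rw [this, Set.ncard_coe_finset]
  -- double counting: ∑ n i = N + ∑_{v ∈ C} (d v - 1)
  have hcount : ∑ i, n i = N + ∑ v ∈ C.toFinset, (d v - 1) := by
    have h1 : ∀ i, n i = ∑ v : V, (if v ∈ S i then 1 else 0) := by
      intro i
      rw [← hScard i, Set.ncard_eq_toFinset_card', ← Set.filter_mem_univ_eq_toFinset,
        Finset.card_filter]
    calc ∑ i, n i = ∑ i, ∑ v : V, (if v ∈ S i then 1 else 0) := by
          exact Finset.sum_congr rfl fun i _ => h1 i
      _ = ∑ v : V, ∑ i, (if v ∈ S i then 1 else 0) := Finset.sum_comm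
      _ = ∑ v : V, d v := by
          refine Finset.sum_congr rfl fun v _ => (Finset.card_filter _ _).symm
      _ = ∑ v : V, (1 + (d v - 1)) := by
          refine Finset.sum_congr rfl fun v _ => ?_
          have := hd1 v; omega
      _ = N + ∑ v : V, (d v - 1) := by
          rw [Finset.sum_add_distrib, Finset.sum_const, Finset.card_univ, smul_eq_mul,
            mul_one, hNdef, Nat.card_eq_fintype_card]
      _ = N + ∑ v ∈ C.toFinset, (d v - 1) := by
          congr 1
          refine (Finset.sum_subset (Finset.subset_univ _) ?_).symm
          intro v _ hv
          have : ¬ 2 ≤ d v := fun h => hv (Set.mem_toFinset.2 ((hCd v).2 h))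
          omega
  -- r ≤ N
  have hrN : r ≤ N := by
    have : (Set.range c).ncard = r := by
      rw [← Set.image_univ, Set.ncard_image_of_injective _ hcinj, Set.ncard_univ,
        Nat.card_eq_fintype_card, Fintype.card_fin]
    calc r = (Set.range c).ncard := this.symm
      _ ≤ (Set.univ : Set V).ncard := Set.ncard_le_ncard (Set.subset_univ _) Set.finite_univ
      _ = N := by rw [Set.ncard_univ]
  -- the lower bound: the set of non-centers is independent of size N - r
  have hlow : ∃ s : Set V, IndepSet T s ∧ s.ncard = N - r := by
    refine ⟨(Set.range c)ᶜ, ?_, ?_⟩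
    · intro u hu v hv huv hadj
      obtain ⟨i, _, ⟨hu', _⟩ | ⟨hv', _⟩⟩ := (hAdj u v).1 hadj
      · exact hu ⟨i, hu'.symm⟩
      · exact hv ⟨i, hv'.symm⟩
    · have h1 : (Set.range c).ncard = r := by
        rw [← Set.image_univ, Set.ncard_image_of_injective _ hcinj, Set.ncard_univ,
          Nat.card_eq_fintype_card, Fintype.card_fin]
      have h2 := Set.ncard_add_ncard_compl (Set.range c) (Set.toFinite _) (Set.toFinite _)
      omega
  -- the upper bound
  have hub : ∀ s : Set V, IndepSet T s → s.ncard ≤ N - r := by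
    intro A hA
    obtain ⟨par, hpar⟩ := tree_parent htree (c ⟨0, by omega⟩)
    -- each center in A has a "child" leaf
    have hex : ∀ i, c i ∈ A → ∃ ℓ, ℓ ∈ S i ∧ ℓ ≠ c i ∧ par ℓ = c i := by
      intro i hi
      have hfin : (S i \ {c i}).Finite := Set.toFinite _
      have hcard : 1 < (S i \ {c i}).ncard := by
        rw [Set.ncard_diff_singleton_of_mem (hcmem i), hScard]
        have := hn i; omega
      obtain ⟨a, b, ha, hb, hab⟩ := (Set.one_lt_ncard_iff hfin).1 hcard
      have hadj : ∀ x, x ∈ S i \ {c i} → T.Adj (c i) x := by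
        rintro x ⟨hxS, hxc⟩
        exact (hAdj (c i) x).2 ⟨i, fun h => hxc (Set.mem_singleton_iff.2 h.symm),
          Or.inl ⟨rfl, hxS⟩⟩
      rcases hpar _ _ (hadj a ha) with hpa | hpa
      · rcases hpar _ _ (hadj b hb) with hpb | hpb
        · exact absurd (hpa.symm.trans hpb) hab
        · exact ⟨b, hb.1, hb.2, hpb⟩
      · exact ⟨a, ha.1, ha.2, hpa⟩
    choose g hg1 hg2 hg3 using hex
    set f : Fin r → V := fun i => if h : c i ∈ A then g i h else c i with hfdef
    have hfA : ∀ i, f i ∉ A := by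
      intro i
      rw [hfdef]
      by_cases h : c i ∈ A
      · simp only [dif_pos h]
        intro hgA
        have hne : c i ≠ g i h := fun he => hg2 i h he.symm
        have hadj : T.Adj (c i) (g i h) :=
          (hAdj (c i) (g i h)).2 ⟨i, hne, Or.inl ⟨rfl, hg1 i h⟩⟩
        exact hA h hgA hne hadj
      · simpa [dif_neg h] using h
    have hfinj : Function.Injective f := by
      intro i j hij
      rw [hfdef] at hij
      simp only at hij
      by_cases hi : c i ∈ A <;> by_cases hj : c j ∈ A
      · rw [dif_pos hi, dif_pos hj] at hij
        have : c i = c j := by rw [← hg3 i hi, ← hg3 j hj, hij]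
        exact hcinj this
      · rw [dif_pos hi, dif_neg hj] at hij
        -- g i hi = c j, but g i hi ∈ S i so j = i, then c i ∈ A contradiction
        have : c j ∈ S i := hij ▸ hg1 i hi
        have hji : i = j := hcenter j i this
        exact absurd (hji ▸ hi) hj
      · rw [dif_neg hi, dif_pos hj] at hij
        have : c i ∈ S j := hij ▸ hg1 j hj
        have hji : j = i := hcenter i j this
        exact absurd (hji ▸ hj) hi
      · rw [dif_neg hi, dif_neg hj] at hij
        exact hcinj hij
    have hsub : A ⊆ (Set.range f)ᶜ := by
      rintro v hv ⟨i, hfi⟩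
      exact hfA i (hfi ▸ hv)
    have hrange : (Set.range f).ncard = r := by
      rw [← Set.image_univ, Set.ncard_image_of_injective _ hfinj, Set.ncard_univ,
        Nat.card_eq_fintype_card, Fintype.card_fin]
    have h2 := Set.ncard_add_ncard_compl (Set.range f) (Set.toFinite _) (Set.toFinite _)
    have h3 : A.ncard ≤ (Set.range f)ᶜ.ncard :=
      Set.ncard_le_ncard hsub (Set.toFinite _)
    omega
  -- conclude: indepNum T = N - r
  have hind : indepNum T = N - r := by
    rw [indepNum]
    apply le_antisymm
    · exact csSup_le ⟨N - r, hlow⟩ (by rintro k ⟨s, hs, rfl⟩; exact hub s hs)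
    · exact le_csSup ⟨N - r, by rintro k ⟨s, hs, rfl⟩; exact hub s hs⟩ hlow
  -- compute the RHS
  have hfin : ∑ᶠ v ∈ C, ((T.neighborSet v).ncard - 1) = ∑ v ∈ C.toFinset, (d v - 1) := by
    conv_lhs => rw [← Set.coe_toFinset C]
    rw [finsum_mem_coe_finset]
    refine Finset.sum_congr rfl fun v hv => ?_
    rw [hdeg v (Set.mem_toFinset.1 hv)]
  have hsum1 : ∑ i, (n i - 1) = (∑ i, n i) - r := by
    have h2 : ∑ i, ((n i - 1) + 1) = ∑ i, n i :=
      Finset.sum_congr rfl fun i _ => by have := hn i; omega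
    rw [Finset.sum_add_distrib, Finset.sum_const, Finset.card_univ, Fintype.card_fin,
      smul_eq_mul, mul_one] at h2
    omega
  rw [hind, hfin, hsum1]
  set a := ∑ v ∈ C.toFinset, (d v - 1)
  omega
end

section
/- For a star connection T on N vertices built from r stars (each with at least 3 vertices), the independence number of T equals N − r. -/
section TreeHelpers

open SimpleGraph

variable {V : Type*} [DecidableEq V] {T : SimpleGraph V} (htree : T.IsTree) (v₀ : V)

include htree

/-- In a tree, any path from `v₀` to `v` has length equal to the distance. -/
lemma tree_path_length_eq {v : V} (p : T.Walk v₀ v) (hp : p.IsPath) :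
    p.length = T.dist v₀ v := by
  obtain ⟨q, hq⟩ := htree.isConnected.exists_walk_length_eq_dist v₀ v
  have hbp : q.bypass.IsPath := q.bypass_isPath
  have heq : p = q.bypass := (htree.existsUnique_path v₀ v).unique hp hbp
  refine le_antisymm ?_ (SimpleGraph.dist_le p)
  calc p.length = q.bypass.length := by rw [heq]
    _ ≤ q.length := q.length_bypass_le
    _ = T.dist v₀ v := hq

/-- If a vertex on a path from the root has distance at least that of the
endpoint, it is the endpoint. -/
lemma tree_eq_endpoint_of_dist {v x : V} (p : T.Walk v₀ v) (hp : p.IsPath)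
    (hx : x ∈ p.support) (hd : T.dist v₀ v ≤ T.dist v₀ x) : x = v := by
  have h1 : T.dist v₀ x ≤ (p.takeUntil x hx).length := SimpleGraph.dist_le _
  have h2 : (p.takeUntil x hx).length + (p.dropUntil x hx).length = p.length := by
    have := congr_arg SimpleGraph.Walk.length (p.take_spec hx)
    rwa [SimpleGraph.Walk.length_append] at this
  have h3 : p.length = T.dist v₀ v := tree_path_length_eq htree v₀ p hp
  have h4 : (p.dropUntil x hx).length = 0 := by omega
  exact SimpleGraph.Walk.eq_of_length_eq_zero h4

/-- Adjacent vertices in a tree have different distances to the root. -/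
lemma tree_adj_dist_ne {u v : V} (h : T.Adj u v) :
    T.dist v₀ u ≠ T.dist v₀ v := by
  intro he
  obtain ⟨p, hp, -⟩ := htree.existsUnique_path v₀ u
  have hv : v ∉ p.support := by
    intro hv
    exact h.ne' (tree_eq_endpoint_of_dist htree v₀ p hp hv he.le)
  set q : T.Walk v₀ v := (SimpleGraph.Walk.cons h.symm p.reverse).reverse with hqdef
  have hq : q.IsPath := by
    apply SimpleGraph.Walk.IsPath.reverse
    exact hp.reverse.cons (by simpa [SimpleGraph.Walk.support_reverse] using hv)
  have hlen : q.length = p.length + 1 := by simp [hqdef]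
  have h1 := tree_path_length_eq htree v₀ p hp
  have h2 := tree_path_length_eq htree v₀ q hq
  omega

/-- In a tree, a vertex has at most one neighbour closer to the root (unique parent). -/
lemma tree_unique_parent {u w v : V} (hu : T.Adj u v) (hw : T.Adj w v)
    (hdu : T.dist v₀ u + 1 = T.dist v₀ v) (hdw : T.dist v₀ w + 1 = T.dist v₀ v) :
    u = w := by
  obtain ⟨pu, hpu, -⟩ := htree.existsUnique_path v₀ u
  obtain ⟨pw, hpw, -⟩ := htree.existsUnique_path v₀ w
  have hvu : v ∉ pu.support := by
    intro hv
    have := tree_eq_endpoint_of_dist htree v₀ pu hpu hv (by omega)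
    subst this; omega
  have hvw : v ∉ pw.support := by
    intro hv
    have := tree_eq_endpoint_of_dist htree v₀ pw hpw hv (by omega)
    subst this; omega
  set qu : T.Walk v₀ v := (SimpleGraph.Walk.cons hu.symm pu.reverse).reverse with hqu
  set qw : T.Walk v₀ v := (SimpleGraph.Walk.cons hw.symm pw.reverse).reverse with hqw
  have hqup : qu.IsPath := by
    apply SimpleGraph.Walk.IsPath.reverse
    exact hpu.reverse.cons (by simpa [SimpleGraph.Walk.support_reverse] using hvu)
  have hqwp : qw.IsPath := by
    apply SimpleGraph.Walk.IsPath.reverse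
    exact hpw.reverse.cons (by simpa [SimpleGraph.Walk.support_reverse] using hvw)
  have heq : qu = qw := (htree.existsUnique_path v₀ v).unique hqup hqwp
  have humem : u ∈ qw.support := by
    rw [← heq]
    simp [hqu, SimpleGraph.Walk.support_reverse]
  have humem' : u ∈ pw.support ∨ u = w ∨ u = v := by
    simpa [hqw, SimpleGraph.Walk.support_reverse] using humem
  rcases humem' with h | h | h
  · exact tree_eq_endpoint_of_dist htree v₀ pw hpw h (by omega)
  · exact h
  · subst h; omega

/-- Adjacent vertices have distances to the root differing by exactly one. -/
lemma tree_adj_dist {u v : V} (h : T.Adj u v) :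
    T.dist v₀ v = T.dist v₀ u + 1 ∨ T.dist v₀ v + 1 = T.dist v₀ u := by
  have hne := tree_adj_dist_ne htree v₀ h
  obtain ⟨p, hp⟩ := htree.isConnected.exists_walk_length_eq_dist v₀ u
  have h1 : T.dist v₀ v ≤ T.dist v₀ u + 1 := by
    have := SimpleGraph.dist_le (p.concat h)
    rwa [SimpleGraph.Walk.length_concat, hp] at this
  obtain ⟨q, hq⟩ := htree.isConnected.exists_walk_length_eq_dist v₀ v
  have h2 : T.dist v₀ u ≤ T.dist v₀ v + 1 := by
    have := SimpleGraph.dist_le (q.concat h.symm)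
    rwa [SimpleGraph.Walk.length_concat, hq] at this
  omega

/-- A vertex with at least two neighbours has a neighbour farther from the root. -/
lemma tree_exists_child {v z₁ z₂ : V} (hne : z₁ ≠ z₂) (h1 : T.Adj v z₁) (h2 : T.Adj v z₂) :
    ∃ z, T.Adj v z ∧ T.dist v₀ z = T.dist v₀ v + 1 := by
  rcases tree_adj_dist htree v₀ h1 with hd1 | hd1
  · exact ⟨z₁, h1, hd1⟩
  rcases tree_adj_dist htree v₀ h2 with hd2 | hd2
  · exact ⟨z₂, h2, hd2⟩
  exact absurd (tree_unique_parent htree v₀ h1.symm h2.symm hd1 hd2) hne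

end TreeHelpers

/-- For a star connection `T` on `N` vertices built from `r` stars (each with at least 3
vertices), the independence number of `T` equals `N - r`. -/
theorem starConnection_indepNum_card_sub {V : Type*} [Fintype V]
    (T : SimpleGraph V) (r : ℕ) (n : Fin r → ℕ) (c : Fin r → V) (S : Fin r → Set V)
    (hr : 2 ≤ r) (hn : ∀ i, 3 ≤ n i)
    (hScard : ∀ i, (S i).ncard = n i)
    (hcmem : ∀ i, c i ∈ S i)
    (hcover : ∀ v, ∃ i, v ∈ S i)
    (hAdj : ∀ u v, T.Adj u v ↔ ∃ i, u ≠ v ∧ ((u = c i ∧ v ∈ S i) ∨ (v = c i ∧ u ∈ S i)))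
    (hinter : ∀ i j, i ≠ j → (S i ∩ S j).Subsingleton)
    (hcenter : ∀ i j, c i ∈ S j → j = i)
    (htree : T.IsTree) :
    indepNum T = Fintype.card V - r := by
  classical
  -- centers are pairwise distinct
  have hcinj : Function.Injective c := by
    intro i j hij
    have h : c i ∈ S j := by rw [hij]; exact hcmem j
    exact (hcenter i j h).symm
  -- neighbours of a center
  have hadjc : ∀ i v, T.Adj (c i) v ↔ v ∈ S i ∧ v ≠ c i := by
    intro i v
    rw [hAdj]
    constructor
    · rintro ⟨j, hne, ⟨h1, h2⟩ | ⟨h1, h2⟩⟩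
      · cases hcinj h1; exact ⟨h2, hne.symm⟩
      · exact absurd ((hcenter i j h2) ▸ h1.symm) hne
    · rintro ⟨hv, hne⟩
      exact ⟨i, hne.symm, Or.inl ⟨rfl, hv⟩⟩
  have hNatcard : Nat.card V = Fintype.card V := Nat.card_eq_fintype_card
  -- the candidate maximum independent set
  have hAindep : IndepSet T ((Set.range c)ᶜ) := by
    intro u hu v hv _ hadj
    rw [hAdj] at hadj
    obtain ⟨i, -, ⟨h1, -⟩ | ⟨h1, -⟩⟩ := hadj
    · exact hu ⟨i, h1.symm⟩
    · exact hv ⟨i, h1.symm⟩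
  have hrange : (Set.range c).ncard = r := by
    rw [← Nat.card_coe_set_eq, Nat.card_range_of_injective hcinj, Nat.card_eq_fintype_card,
      Fintype.card_fin]
  have hAcard : ((Set.range c)ᶜ).ncard = Fintype.card V - r := by
    have := Set.ncard_add_ncard_compl (Set.range c)
    rw [hrange, hNatcard] at this
    omega
  -- upper bound: every independent set has at most |V| - r elements
  have hub : ∀ s : Set V, IndepSet T s → s.ncard ≤ Fintype.card V - r := by
    intro s hs
    set v₀ : V := c ⟨0, by omega⟩ with hv₀
    -- every center has a child
    have hchild : ∀ i, ∃ z, T.Adj (c i) z ∧ T.dist v₀ z = T.dist v₀ (c i) + 1 := by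
      intro i
      have h2 : 1 < (S i \ {c i}).ncard := by
        have : (S i \ {c i}).ncard = n i - 1 := by
          rw [Set.ncard_diff_singleton_of_mem (hcmem i), hScard]
        have := hn i; omega
      rw [Set.one_lt_ncard_iff] at h2
      obtain ⟨a, b, ha, hb, hab⟩ := h2
      exact tree_exists_child htree v₀ hab
        ((hadjc i a).2 ⟨ha.1, ha.2⟩) ((hadjc i b).2 ⟨hb.1, hb.2⟩)
    choose g hg1 hg2 using hchild
    set f : Fin r → V := fun i => if c i ∈ s then g i else c i with hf
    have hfnotmem : ∀ i, f i ∉ s := by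
      intro i
      by_cases h : c i ∈ s
      · simp only [hf, if_pos h]
        intro hgs
        exact hs h hgs (hg1 i).ne (hg1 i)
      · simpa only [hf, if_neg h] using h
    have hginj : ∀ i j, g i = g j → i = j := by
      intro i j hij
      apply hcinj
      refine tree_unique_parent htree v₀ (hg1 i) (hij.symm ▸ hg1 j) ?_ ?_
      · have := hg2 i; omega
      · have := hg2 j; rw [← hij] at this; omega
    have hgnec : ∀ i j, g i ≠ c j := by
      intro i j h
      have hm : g i ∈ S i := ((hadjc i (g i)).1 (hg1 i)).1
      rw [h] at hm
      have hij := hcenter j i hm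
      subst hij
      exact ((hadjc i (g i)).1 (hg1 i)).2 h
    have hfinj : Function.Injective f := by
      intro i j hij
      simp only [hf] at hij
      by_cases hi : c i ∈ s <;> by_cases hj : c j ∈ s
      · rw [if_pos hi, if_pos hj] at hij; exact hginj i j hij
      · rw [if_pos hi, if_neg hj] at hij; exact absurd hij (hgnec i j)
      · rw [if_neg hi, if_pos hj] at hij; exact absurd hij.symm (hgnec j i)
      · rw [if_neg hi, if_neg hj] at hij; exact hcinj hij
    have hsub : Set.range f ⊆ sᶜ := by
      rintro x ⟨i, rfl⟩
      exact hfnotmem i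
    have hrf : (Set.range f).ncard = r := by
      rw [← Nat.card_coe_set_eq, Nat.card_range_of_injective hfinj,
        Nat.card_eq_fintype_card, Fintype.card_fin]
    have h1 : r ≤ sᶜ.ncard := hrf ▸ Set.ncard_le_ncard hsub (Set.toFinite _)
    have h2 := Set.ncard_add_ncard_compl s
    rw [hNatcard] at h2
    omega
  -- conclude
  have hmem : Fintype.card V - r ∈ {k | ∃ s : Set V, IndepSet T s ∧ s.ncard = k} :=
    ⟨(Set.range c)ᶜ, hAindep, hAcard⟩
  apply le_antisymm
  · exact csSup_le ⟨_, hmem⟩ (by rintro k ⟨s, h1, rfl⟩; exact hub s h1)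
  · exact le_csSup ⟨Fintype.card V - r, by rintro k ⟨s, h1, rfl⟩; exact hub s h1⟩ hmem
end
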